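/- For every p > 1 and every x ∈ (0,1), the functions k ↦ (arctan_p(x^k))^(1/k) and k ↦ (arsinh_p(x^k))^(1/k) are increasing in k on (0,∞); that is, for all 0 < k₁ < k₂ one has (arctan_p(x^(k₁)))^(1/k₁) ≤ (arctan_p(x^(k₂)))^(1/k₂) and (arsinh_p(x^(k₁)))^(1/k₁) ≤ (arsinh_p(x^(k₂)))^(1/k₂). -/

import Mathlib

open Real

/-- The generalized inverse tangent: `arctan_p x = ∫₀ˣ (1 + tᵖ)⁻¹ dt`. -/
noncomputable def arctanp (p x : ℝ) : ℝ := ∫ t in (0:ℝ)..x, (1 + t ^ p)⁻¹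

/-- The generalized inverse hyperbolic sine: `arsinh_p x = ∫₀ˣ (1 + tᵖ)^(-1/p) dt`. -/
noncomputable def arsinhp (p x : ℝ) : ℝ := ∫ t in (0:ℝ)..x, (1 + t ^ p) ^ (-1 / p)

lemma key_rpow_increasing (g : ℝ → ℝ) (hc : ContinuousOn g (Set.Icc 0 1))
    (ha : AntitoneOn g (Set.Icc 0 1)) (hgpos : ∀ t ∈ Set.Icc (0:ℝ) 1, 0 < g t)
    (hgle : ∀ t ∈ Set.Icc (0:ℝ) 1, g t ≤ 1)
    {x k₁ k₂ : ℝ} (hx : x ∈ Set.Ioo (0:ℝ) 1) (hk₁ : 0 < k₁) (hk : k₁ < k₂) :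
    (∫ t in (0:ℝ)..x ^ k₁, g t) ^ (1 / k₁) ≤ (∫ t in (0:ℝ)..x ^ k₂, g t) ^ (1 / k₂) := by
  obtain ⟨hx0, hx1⟩ := hx
  have hk₂ : 0 < k₂ := hk₁.trans hk
  set u : ℝ := x ^ k₂ with hu_def
  set v : ℝ := x ^ k₁ with hv_def
  have hu0 : 0 < u := Real.rpow_pos_of_pos hx0 _
  have hv0 : 0 < v := Real.rpow_pos_of_pos hx0 _
  have huv : u < v := Real.rpow_lt_rpow_of_exponent_gt hx0 hx1 hk
  have hv1 : v < 1 := Real.rpow_lt_one hx0.le hx1 hk₁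
  have hu1 : u < 1 := huv.trans hv1
  have hint : ∀ a b : ℝ, 0 ≤ a → b ≤ 1 → a ≤ b → IntervalIntegrable g MeasureTheory.volume a b := by
    intro a b h0 h1 hab
    exact (hc.mono (by rw [Set.uIcc_of_le hab]; exact Set.Icc_subset_Icc h0 h1)).intervalIntegrable
  -- upper bound F y ≤ y
  have hup : ∀ y : ℝ, 0 ≤ y → y ≤ 1 → (∫ t in (0:ℝ)..y, g t) ≤ y := by
    intro y h0 h1
    have : (∫ t in (0:ℝ)..y, g t) ≤ ∫ t in (0:ℝ)..y, (1:ℝ) := by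
      apply intervalIntegral.integral_mono_on h0 (hint 0 y le_rfl h1 h0) intervalIntegrable_const
      intro t ht
      exact hgle t ⟨ht.1, ht.2.trans h1⟩
    simpa using this
  -- lower bound y * g y ≤ F y
  have hlow : ∀ y : ℝ, 0 ≤ y → y ≤ 1 → y * g y ≤ ∫ t in (0:ℝ)..y, g t := by
    intro y h0 h1
    have : (∫ t in (0:ℝ)..y, g y) ≤ ∫ t in (0:ℝ)..y, g t := by
      apply intervalIntegral.integral_mono_on h0 intervalIntegrable_const (hint 0 y le_rfl h1 h0)
      intro t ht
      exact ha ⟨ht.1, ht.2.trans h1⟩ ⟨h0, h1⟩ ht.2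
    simpa [mul_comm] using this
  set A : ℝ := ∫ t in (0:ℝ)..u, g t with hA_def
  set B : ℝ := ∫ t in (0:ℝ)..v, g t with hB_def
  have hguA : u * g u ≤ A := hlow u hu0.le hu1.le
  have hgu_pos : 0 < g u := hgpos u ⟨hu0.le, hu1.le⟩
  have hgv_pos : 0 < g v := hgpos v ⟨hv0.le, hv1.le⟩
  have hA_pos : 0 < A := lt_of_lt_of_le (by positivity) hguA
  have hB_pos : 0 < B := lt_of_lt_of_le (by positivity) (hlow v hv0.le hv1.le)
  have hBv : B ≤ v := hup v hv0.le hv1.le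
  -- split and middle bound
  have hsplit : B = A + ∫ t in u..v, g t := by
    rw [hA_def, hB_def,
      intervalIntegral.integral_add_adjacent_intervals (hint 0 u le_rfl hu1.le hu0.le)
        (hint u v hu0.le hv1.le huv.le)]
  have hmid : (∫ t in u..v, g t) ≤ (v - u) * g u := by
    have : (∫ t in u..v, g t) ≤ ∫ t in u..v, g u := by
      apply intervalIntegral.integral_mono_on huv.le (hint u v hu0.le hv1.le huv.le)
        intervalIntegrable_const
      intro t ht
      exact ha ⟨hu0.le, hu1.le⟩ ⟨hu0.le.trans ht.1, ht.2.trans hv1.le⟩ ht.1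
    simpa [mul_comm] using this
  -- ratio monotonicity: u * B ≤ v * A
  have hratio : u * B ≤ v * A := by nlinarith [hguA, hmid, hsplit, hu0.le, huv.le]
  -- v ^ (k₂ / k₁) = u
  have hv_pow : v ^ (k₂ / k₁) = u := by
    rw [hv_def, hu_def, ← Real.rpow_mul hx0.le]
    congr 1
    field_simp
  -- step 1 : B * v ^ (k₂/k₁ - 1) ≤ A
  have h1 : B * v ^ (k₂ / k₁ - 1) ≤ A := by
    rw [Real.rpow_sub hv0, Real.rpow_one, hv_pow]
    rw [show B * (u / v) = u * B / v by ring, div_le_iff₀ hv0]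
    linarith [hratio]
  -- step 2 : B ^ k₂ ≤ (B * v ^ (k₂/k₁ - 1)) ^ k₁
  have h2 : B ^ k₂ ≤ (B * v ^ (k₂ / k₁ - 1)) ^ k₁ := by
    have hvp : (0:ℝ) ≤ v ^ (k₂ / k₁ - 1) := Real.rpow_nonneg hv0.le _
    rw [Real.mul_rpow hB_pos.le hvp]
    rw [← Real.rpow_mul hv0.le]
    have he : (k₂ / k₁ - 1) * k₁ = k₂ - k₁ := by field_simp
    rw [he]
    have hBle : B ^ (k₂ - k₁) ≤ v ^ (k₂ - k₁) :=
      Real.rpow_le_rpow hB_pos.le hBv (by linarith)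
    calc B ^ k₂ = B ^ k₁ * B ^ (k₂ - k₁) := by
          rw [← Real.rpow_add hB_pos]; ring_nf
      _ ≤ B ^ k₁ * v ^ (k₂ - k₁) := by
          exact mul_le_mul_of_nonneg_left hBle (Real.rpow_nonneg hB_pos.le _)
  -- combine : B ^ k₂ ≤ A ^ k₁
  have h3 : B ^ k₂ ≤ A ^ k₁ := by
    refine h2.trans ?_
    exact Real.rpow_le_rpow (by positivity) h1 hk₁.le
  -- conclude by raising to power 1/(k₁ k₂)
  have h4 := Real.rpow_le_rpow (Real.rpow_nonneg hB_pos.le k₂) h3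
    (le_of_lt (by positivity : (0:ℝ) < 1 / (k₁ * k₂)))
  rwa [← Real.rpow_mul hB_pos.le, ← Real.rpow_mul hA_pos.le,
    show k₂ * (1 / (k₁ * k₂)) = 1 / k₁ by field_simp,
    show k₁ * (1 / (k₁ * k₂)) = 1 / k₂ by field_simp] at h4

theorem arctanp_arsinhp_rpow_increasing (p x : ℝ) (hp : 1 < p)
    (hx : x ∈ Set.Ioo (0:ℝ) 1) (k₁ k₂ : ℝ) (hk₁ : 0 < k₁) (hk : k₁ < k₂) :
    (arctanp p (x ^ k₁)) ^ (1 / k₁) ≤ (arctanp p (x ^ k₂)) ^ (1 / k₂) ∧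
      (arsinhp p (x ^ k₁)) ^ (1 / k₁) ≤ (arsinhp p (x ^ k₂)) ^ (1 / k₂) := by
  have hp0 : 0 < p := lt_trans one_pos hp
  have hbase : ∀ t : ℝ, 0 ≤ t → (0:ℝ) < 1 + t ^ p := by
    intro t ht
    nlinarith [Real.rpow_nonneg ht p]
  have hbase_cont : ContinuousOn (fun t : ℝ => 1 + t ^ p) (Set.Icc 0 1) := by
    apply continuousOn_const.add
    intro t ht
    exact (Real.continuousAt_rpow_const t p (Or.inr hp0.le)).continuousWithinAt
  have hbase_mono : ∀ s t : ℝ, s ∈ Set.Icc (0:ℝ) 1 → s ≤ t → 1 + s ^ p ≤ 1 + t ^ p := by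
    intro s t hs hst
    have : s ^ p ≤ t ^ p := Real.rpow_le_rpow hs.1 hst hp0.le
    linarith
  constructor
  · rw [arctanp, arctanp]
    apply key_rpow_increasing _ _ _ _ _ hx hk₁ hk
    · exact hbase_cont.inv₀ (fun t ht => ne_of_gt (hbase t ht.1))
    · intro s hs t ht hst
      exact inv_anti₀ (hbase s hs.1) (hbase_mono s t hs hst)
    · intro t ht
      exact inv_pos.2 (hbase t ht.1)
    · intro t ht
      rw [inv_le_one_iff₀]
      right
      nlinarith [Real.rpow_nonneg ht.1 p]
  · rw [arsinhp, arsinhp]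
    have hneg : (-1 : ℝ) / p ≤ 0 := by
      rw [neg_div]
      exact neg_nonpos.2 (by positivity)
    apply key_rpow_increasing _ _ _ _ _ hx hk₁ hk
    · exact hbase_cont.rpow_const (fun t ht => Or.inl (ne_of_gt (hbase t ht.1)))
    · intro s hs t ht hst
      exact Real.rpow_le_rpow_of_nonpos (hbase s hs.1) (hbase_mono s t hs hst) hneg
    · intro t ht
      exact Real.rpow_pos_of_pos (hbase t ht.1) _
    · intro t ht
      apply Real.rpow_le_one_of_one_le_of_nonpos _ hneg
      nlinarith [Real.rpow_nonneg ht.1 p]
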